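/- arXiv:1703.05117 — 3 statements merged into one kernel-verified Lean document; each statement's English description precedes it below -/
import Mathlib

section
/- Let t_f > 0 and let r, L, l, γ, χ : [0,t_f] → ℝ be continuous with r(t) > 0 and cos L(t) ≠ 0 for all t, and cos γ(t) ≠ 0 for almost every t ∈ [0,t_f]. Suppose p_r, p_L, p_l : [0,t_f] → ℝ are continuous and satisfy, for almost every t: (i) p_r(t) sin γ(t) + p_L(t) cos γ(t) cos χ(t) / r(t) + p_l(t) cos γ(t) sin χ(t) / (r(t) cos L(t)) = 0; (ii) −p_r(t) cos γ(t) + p_L(t) sin γ(t) cos χ(t) / r(t) + p_l(t) sin γ(t) sin χ(t) / (r(t) cos L(t)) = 0; (iii) p_L(t) cos γ(t) sin χ(t) / r(t) − p_l(t) cos γ(t) cos χ(t) / (r(t) cos L(t)) = 0. Then p_r(t) = p_L(t) = p_l(t) = 0 for all t ∈ [0,t_f]. -/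
open MeasureTheory

lemma key_alg (rt cLt cγt sγt cχt sχt prt pLt plt : ℝ)
    (hr : rt ≠ 0) (hcL : cLt ≠ 0) (hcγ : cγt ≠ 0)
    (hγ1 : sγt ^ 2 + cγt ^ 2 = 1) (hχ1 : sχt ^ 2 + cχt ^ 2 = 1)
    (e1 : prt * sγt + pLt * (cγt * cχt) / rt + plt * (cγt * sχt) / (rt * cLt) = 0)
    (e2 : -prt * cγt + pLt * (sγt * cχt) / rt + plt * (sγt * sχt) / (rt * cLt) = 0)
    (e3 : pLt * (cγt * sχt) / rt - plt * (cγt * cχt) / (rt * cLt) = 0) :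
    prt = 0 ∧ pLt = 0 ∧ plt = 0 := by
  field_simp at e1 e2 e3
  have h1 : prt * (rt ^ 2 * cLt) = 0 := by
    linear_combination rt * (sγt * e1 - cγt * e2) - prt * rt ^ 2 * cLt * hγ1
  have hpr0 : prt = 0 :=
    (mul_eq_zero.mp h1).resolve_right (mul_ne_zero (pow_ne_zero 2 hr) hcL)
  have h2 : pLt * (cγt * rt * cLt) = 0 := by
    linear_combination rt * (cχt * e1 + sχt * e3) - pLt * cγt * rt * cLt * hχ1
      - (sγt * rt * rt * cLt * cχt) * hpr0
  have hpL0 : pLt = 0 :=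
    (mul_eq_zero.mp h2).resolve_right (mul_ne_zero (mul_ne_zero hcγ hr) hcL)
  have h3 : plt * (cγt * rt) = 0 := by
    linear_combination rt * (sχt * e1 - cχt * e3) - plt * cγt * rt * hχ1
      - (sγt * rt * rt * cLt * sχt) * hpr0
  have hpl0 : plt = 0 := (mul_eq_zero.mp h3).resolve_right (mul_ne_zero hcγ hr)
  exact ⟨hpr0, hpL0, hpl0⟩

/-- Core of the no-abnormal-extremals result (Proposition 1): if the continuous adjoint
components `p_r, p_L, p_l` satisfy, almost everywhere on `[0, t_f]`, the homogeneous
linear system coming from `H = 0`, `p_γ' = 0` and `p_χ' = 0` along a trajectory with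
`r > 0`, `cos L ≠ 0` everywhere and `cos γ ≠ 0` almost everywhere, then they vanish
identically on `[0, t_f]`. -/
theorem abnormal_adjoint_vanishes
    (tf : ℝ) (htf : 0 < tf)
    (r L l γ χ : ℝ → ℝ)
    (hr : ContinuousOn r (Set.Icc 0 tf)) (hL : ContinuousOn L (Set.Icc 0 tf))
    (hl : ContinuousOn l (Set.Icc 0 tf)) (hγ : ContinuousOn γ (Set.Icc 0 tf))
    (hχ : ContinuousOn χ (Set.Icc 0 tf))
    (hrpos : ∀ t ∈ Set.Icc (0 : ℝ) tf, 0 < r t)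
    (hcosL : ∀ t ∈ Set.Icc (0 : ℝ) tf, Real.cos (L t) ≠ 0)
    (hcosγ : ∀ᵐ t ∂(volume.restrict (Set.Icc (0 : ℝ) tf)), Real.cos (γ t) ≠ 0)
    (pr pL pl : ℝ → ℝ)
    (hpr : ContinuousOn pr (Set.Icc 0 tf)) (hpL : ContinuousOn pL (Set.Icc 0 tf))
    (hpl : ContinuousOn pl (Set.Icc 0 tf))
    (hH : ∀ᵐ t ∂(volume.restrict (Set.Icc (0 : ℝ) tf)),
      pr t * Real.sin (γ t) + pL t * (Real.cos (γ t) * Real.cos (χ t)) / r t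
        + pl t * (Real.cos (γ t) * Real.sin (χ t)) / (r t * Real.cos (L t)) = 0)
    (hpγ' : ∀ᵐ t ∂(volume.restrict (Set.Icc (0 : ℝ) tf)),
      -(pr t) * Real.cos (γ t) + pL t * (Real.sin (γ t) * Real.cos (χ t)) / r t
        + pl t * (Real.sin (γ t) * Real.sin (χ t)) / (r t * Real.cos (L t)) = 0)
    (hpχ' : ∀ᵐ t ∂(volume.restrict (Set.Icc (0 : ℝ) tf)),
      pL t * (Real.cos (γ t) * Real.sin (χ t)) / r t
        - pl t * (Real.cos (γ t) * Real.cos (χ t)) / (r t * Real.cos (L t)) = 0) :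
    ∀ t ∈ Set.Icc (0 : ℝ) tf, pr t = 0 ∧ pL t = 0 ∧ pl t = 0 := by
  -- Step 1: the adjoint components vanish almost everywhere.
  set f : ℝ → ℝ := fun t => pr t ^ 2 + pL t ^ 2 + pl t ^ 2 with hf
  have hfc : ContinuousOn f (Set.Icc 0 tf) :=
    ((hpr.pow 2).add (hpL.pow 2)).add (hpl.pow 2)
  have hae : ∀ᵐ t ∂(volume.restrict (Set.Icc (0 : ℝ) tf)), f t = 0 := by
    have hmem : ∀ᵐ t ∂(volume.restrict (Set.Icc (0 : ℝ) tf)), t ∈ Set.Icc (0 : ℝ) tf :=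
      ae_restrict_mem measurableSet_Icc
    filter_upwards [hH, hpγ', hpχ', hcosγ, hmem] with t e1 e2 e3 hc ht
    obtain ⟨h1, h2, h3⟩ := key_alg (r t) (Real.cos (L t)) (Real.cos (γ t)) (Real.sin (γ t))
      (Real.cos (χ t)) (Real.sin (χ t)) (pr t) (pL t) (pl t)
      (hrpos t ht).ne' (hcosL t ht) hc (Real.sin_sq_add_cos_sq _) (Real.sin_sq_add_cos_sq _)
      e1 e2 e3
    simp [hf, h1, h2, h3]
  -- Step 2: by continuity, they vanish everywhere.
  intro t₀ ht₀
  by_contra hcon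
  have hne : f t₀ ≠ 0 := by
    intro h
    simp only [hf] at h
    exact hcon ⟨by nlinarith [sq_nonneg (pL t₀), sq_nonneg (pl t₀)],
      by nlinarith [sq_nonneg (pr t₀), sq_nonneg (pl t₀)],
      by nlinarith [sq_nonneg (pr t₀), sq_nonneg (pL t₀)]⟩
  have hft₀ : 0 < f t₀ := lt_of_le_of_ne (by simp only [hf]; positivity) (Ne.symm hne)
  -- f is positive on a relative neighborhood of t₀
  have hev : ∀ᶠ x in nhdsWithin t₀ (Set.Icc 0 tf), 0 < f x :=
    (hfc t₀ ht₀).eventually (eventually_gt_nhds hft₀)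
  obtain ⟨ε, hε, hball⟩ := Metric.mem_nhdsWithin_iff.mp hev
  -- a nondegenerate interval inside ball ∩ Icc
  set u := max 0 (t₀ - ε) with hu
  set v := min tf (t₀ + ε) with hv
  have huv : u < v := by
    rcases ht₀ with ⟨h0, h1⟩
    simp only [hu, hv, max_lt_iff, lt_min_iff]
    constructor <;> constructor <;> linarith
  have hsub : Set.Ioo u v ⊆ Metric.ball t₀ ε ∩ Set.Icc 0 tf := by
    rintro x ⟨hx1, hx2⟩
    have hxu0 : (0:ℝ) ≤ u := le_max_left _ _
    have hxu1 : t₀ - ε ≤ u := le_max_right _ _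
    have hxv0 : v ≤ tf := min_le_left _ _
    have hxv1 : v ≤ t₀ + ε := min_le_right _ _
    constructor
    · rw [Metric.mem_ball, Real.dist_eq, abs_lt]; constructor <;> linarith
    · exact ⟨by linarith, by linarith⟩
  -- measure-zero contradiction
  have hzero : volume.restrict (Set.Icc (0:ℝ) tf) {x | ¬ f x = 0} = 0 := ae_iff.mp hae
  have hzero' : volume ({x | ¬ f x = 0} ∩ Set.Icc (0:ℝ) tf) = 0 := by
    rwa [Measure.restrict_apply' measurableSet_Icc] at hzero
  have hIoo : Set.Ioo u v ⊆ {x | ¬ f x = 0} ∩ Set.Icc (0:ℝ) tf := by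
    intro x hx
    obtain ⟨hb, hi⟩ := hsub hx
    exact ⟨(hball ⟨hb, hi⟩).ne', hi⟩
  have hpos : 0 < volume (Set.Ioo u v) := by
    rw [Real.volume_Ioo]; exact ENNReal.ofReal_pos.mpr (by linarith)
  have hz : volume (Set.Ioo u v) = 0 :=
    le_antisymm (hzero' ▸ measure_mono hIoo) zero_le
  exact hpos.ne' hz
end

section
/- Let I be an interval, c_m ∈ ℝ, and let R, γ, λ₁, u₁, v : I → ℝ be differentiable with R(t) > 0 and satisfying for all t ∈ I: R'(t) = −v(t) cos(γ(t) − λ₁(t)), λ₁'(t) = −(v(t)/R(t)) sin(γ(t) − λ₁(t)), and γ'(t) = v(t) c_m u₁(t). Then for all t ∈ I, d/dt [ R(t) sin(γ(t) − λ₁(t)) ] = −R(t) R'(t) c_m u₁(t). -/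
/-- Along the line-of-sight kinematics `R' = −v cos(γ − λ₁)`,
`λ₁' = −(v/R) sin(γ − λ₁)` and the simplified path-angle dynamics `γ' = v c_m u₁`,
one has `d/dt [R sin(γ − λ₁)] = −R R' c_m u₁`. -/
theorem deriv_R_sin_los
    (I : Set ℝ) (hI : I.OrdConnected) (cm : ℝ)
    (R γ lam₁ u₁ v : ℝ → ℝ)
    (hu₁ : ∀ t ∈ I, DifferentiableAt ℝ u₁ t)
    (hv : ∀ t ∈ I, DifferentiableAt ℝ v t)
    (hRpos : ∀ t ∈ I, 0 < R t)
    (hR : ∀ t ∈ I, HasDerivAt R (-(v t) * Real.cos (γ t - lam₁ t)) t)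
    (hlam₁ : ∀ t ∈ I, HasDerivAt lam₁ (-(v t / R t) * Real.sin (γ t - lam₁ t)) t)
    (hγ : ∀ t ∈ I, HasDerivAt γ (v t * cm * u₁ t) t) :
    ∀ t ∈ I,
      HasDerivAt (fun s => R s * Real.sin (γ s - lam₁ s))
        (-(R t) * (-(v t) * Real.cos (γ t - lam₁ t)) * cm * u₁ t) t := by
  intro t ht
  have hRne : R t ≠ 0 := (hRpos t ht).ne'
  have hθ : HasDerivAt (fun s => γ s - lam₁ s)
      (v t * cm * u₁ t - -(v t / R t) * Real.sin (γ t - lam₁ t)) t :=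
    (hγ t ht).sub (hlam₁ t ht)
  have hsin : HasDerivAt (fun s => Real.sin (γ s - lam₁ s))
      (Real.cos (γ t - lam₁ t) * (v t * cm * u₁ t - -(v t / R t) * Real.sin (γ t - lam₁ t))) t :=
    (Real.hasDerivAt_sin _).comp t hθ
  have h : HasDerivAt (fun s => R s * Real.sin (γ s - lam₁ s)) _ t := (hR t ht).mul hsin
  convert h using 1
  have hdiv : v t / R t * R t = v t := div_mul_cancel₀ _ hRne
  linear_combination (-(Real.cos (γ t - lam₁ t)) * Real.sin (γ t - lam₁ t)) * hdiv
end

section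
/- Let b > 0, c_m ≠ 0, h ∈ ℝ, s_f > 0, A, B ∈ ℝ, and define u : [0, s_f] → ℝ by u(s) = A e^{b(s_f − s)} + B e^{−b(s_f − s)} − h/(c_m). Let γ : [0, s_f] → ℝ be differentiable with γ'(s) = c_m u(s), and let σ : [0, s_f] → ℝ be differentiable with σ'(s) = (s_f − s) c_m u(s) and σ(s_f) = 0. For R > 0 set Δ(R) = 4 + e^{bR}(bR − 2) − e^{−bR}(bR + 2), k₁(R) = bR (e^{bR} − e^{−bR} − 2bR) / Δ(R), and k₂(R) = bR ( e^{bR}(bR − 1) + e^{−bR}(bR + 1) ) / Δ(R). Then for every s ∈ [0, s_f), setting R = s_f − s: −((k₁(R) + k₂(R)) / R²) ( σ(s) − h R²/2 ) − (k₁(R)/R) ( γ(s_f) − γ(s) + h R ) = c_m u(s) + h. -/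
open Real Set

lemma tanh_aux : ∀ t : ℝ, 0 < t → Real.sinh t < t * Real.cosh t := by
  have hmono : StrictMonoOn (fun t : ℝ => t * Real.cosh t - Real.sinh t) (Ici 0) := by
    apply strictMonoOn_of_deriv_pos (convex_Ici 0)
    · exact ((continuous_id.mul Real.continuous_cosh).sub Real.continuous_sinh).continuousOn
    · intro x hx
      rw [interior_Ici, mem_Ioi] at hx
      have hd : HasDerivAt (fun t : ℝ => t * Real.cosh t - Real.sinh t)
          (x * Real.sinh x) x := by
        have := ((hasDerivAt_id x).mul (Real.hasDerivAt_cosh x)).sub (Real.hasDerivAt_sinh x)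
        exact this.congr_deriv (by simp)
      rw [hd.deriv]
      exact mul_pos hx (Real.sinh_pos_iff.2 hx)
  intro t ht
  have := hmono (self_mem_Ici) (le_of_lt ht : (0:ℝ) ≤ t) ht
  simp only [zero_mul, Real.sinh_zero, sub_zero, zero_sub] at this
  linarith

lemma delta_pos {x : ℝ} (hx : 0 < x) :
    0 < 4 + Real.exp x * (x - 2) - Real.exp (-x) * (x + 2) := by
  have h1 : Real.exp (x/2) * Real.exp (-(x/2)) = 1 := by
    rw [← Real.exp_add]; simp
  have hE : Real.exp x = Real.exp (x/2) * Real.exp (x/2) := by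
    rw [← Real.exp_add]; ring_nf
  have hE' : Real.exp (-x) = Real.exp (-(x/2)) * Real.exp (-(x/2)) := by
    rw [← Real.exp_add]; ring_nf
  have key : 4 + Real.exp x * (x - 2) - Real.exp (-x) * (x + 2)
      = 8 * Real.sinh (x/2) * ((x/2) * Real.cosh (x/2) - Real.sinh (x/2)) := by
    rw [Real.sinh_eq, Real.cosh_eq, hE, hE']
    linear_combination -4 * h1
  rw [key]
  have ht : 0 < x / 2 := by linarith
  have := tanh_aux (x/2) ht
  have hs : 0 < Real.sinh (x/2) := Real.sinh_pos_iff.2 ht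
  nlinarith

set_option maxHeartbeats 2000000 in
/-- Exact identity underlying the analytical guidance law: if
`u(s) = A e^{b(s_f−s)} + B e^{−b(s_f−s)} − h/c_m`, `γ' = c_m u`,
`σ' = (s_f − s) c_m u` with `σ(s_f) = 0`, then for `R = s_f − s > 0`,
`−((k₁(R)+k₂(R))/R²)(σ(s) − hR²/2) − (k₁(R)/R)(γ(s_f) − γ(s) + hR) = c_m u(s) + h`,
where `k₁, k₂` are the gain functions with denominator
`Δ(R) = 4 + e^{bR}(bR−2) − e^{−bR}(bR+2)`. -/
theorem guidance_law_identity
    (b cm h sf A B : ℝ) (hb : 0 < b) (hcm : cm ≠ 0) (hsf : 0 < sf)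
    (u : ℝ → ℝ)
    (hu : ∀ s ∈ Set.Icc (0 : ℝ) sf,
      u s = A * Real.exp (b * (sf - s)) + B * Real.exp (-(b * (sf - s))) - h / cm)
    (γ σ : ℝ → ℝ)
    (hγ : ∀ s ∈ Set.Icc (0 : ℝ) sf, HasDerivAt γ (cm * u s) s)
    (hσ : ∀ s ∈ Set.Icc (0 : ℝ) sf, HasDerivAt σ ((sf - s) * (cm * u s)) s)
    (hσf : σ sf = 0)
    (k₁ k₂ : ℝ → ℝ)
    (hk₁ : ∀ R > (0 : ℝ), k₁ R =
      b * R * (Real.exp (b * R) - Real.exp (-(b * R)) - 2 * b * R) /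
        (4 + Real.exp (b * R) * (b * R - 2) - Real.exp (-(b * R)) * (b * R + 2)))
    (hk₂ : ∀ R > (0 : ℝ), k₂ R =
      b * R * (Real.exp (b * R) * (b * R - 1) + Real.exp (-(b * R)) * (b * R + 1)) /
        (4 + Real.exp (b * R) * (b * R - 2) - Real.exp (-(b * R)) * (b * R + 2))) :
    ∀ s ∈ Set.Ico (0 : ℝ) sf,
      -((k₁ (sf - s) + k₂ (sf - s)) / (sf - s) ^ 2) * (σ s - h * (sf - s) ^ 2 / 2)
        - (k₁ (sf - s) / (sf - s)) * (γ sf - γ s + h * (sf - s))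
      = cm * u s + h := by
  have hb' : b ≠ 0 := ne_of_gt hb
  -- explicit antiderivatives
  set G : ℝ → ℝ := fun t =>
    -(cm*A/b) * Real.exp (b*(sf - t)) + (cm*B/b) * Real.exp (-(b*(sf - t))) - h*t with hG_def
  set S : ℝ → ℝ := fun t =>
    cm*A*(Real.exp (b*(sf - t))*(1 - b*(sf - t)))/b^2
      + cm*B*(Real.exp (-(b*(sf - t)))*(b*(sf - t) + 1))/b^2 + h*(sf - t)^2/2 with hS_def
  have hlin : ∀ t : ℝ, HasDerivAt (fun t => b*(sf - t)) (-b) t := by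
    intro t
    have := ((hasDerivAt_id t).const_sub sf).const_mul b
    exact this.congr_deriv (by ring)
  have hGd : ∀ t ∈ Set.Icc (0:ℝ) sf, HasDerivAt G (cm * u t) t := by
    intro t ht
    have e1 := (hlin t).exp
    have e2 := ((hlin t).neg).exp
    have := (((e1.const_mul (-(cm*A/b))).add (e2.const_mul (cm*B/b))).sub
      ((hasDerivAt_id t).const_mul h))
    refine this.congr_deriv ?_
    rw [hu t ht]
    simp only [Pi.neg_apply]
    field_simp
  have hSd : ∀ t ∈ Set.Icc (0:ℝ) sf, HasDerivAt S ((sf - t) * (cm * u t)) t := by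
    intro t ht
    have e1 := (hlin t).exp
    have e2 := ((hlin t).neg).exp
    have p1 : HasDerivAt (fun t => Real.exp (b*(sf - t))*(1 - b*(sf - t)))
        (Real.exp (b*(sf - t)) * (-b) * (1 - b*(sf - t)) + Real.exp (b*(sf - t)) * (-(-b))) t :=
      e1.mul ((hlin t).const_sub 1)
    have p2 : HasDerivAt (fun t => Real.exp (-(b*(sf - t)))*(b*(sf - t) + 1))
        (Real.exp (-(b*(sf - t))) * (-(-b)) * (b*(sf - t) + 1)
          + Real.exp (-(b*(sf - t))) * (-b)) t :=
      e2.mul ((hlin t).add_const 1)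
    have p3 : HasDerivAt (fun t : ℝ => h*(sf - t)^2/2) (h*(2*(sf - t)*(-1))/2) t := by
      have := (((hasDerivAt_id t).const_sub sf).pow 2).const_mul h
      refine (this.div_const 2).congr_deriv ?_
      simp only [id_eq]
      ring
    have := (((p1.const_mul (cm*A)).div_const (b^2)).add
      ((p2.const_mul (cm*B)).div_const (b^2))).add p3
    refine this.congr_deriv ?_
    rw [hu t ht]
    field_simp
    ring
  intro s hs
  obtain ⟨hs0, hssf⟩ := hs
  have hR : 0 < sf - s := by linarith
  have hsub : Set.Icc s sf ⊆ Set.Icc (0:ℝ) sf := Set.Icc_subset_Icc hs0 le_rfl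
  -- γ sf - G sf = γ s - G s
  have hγG : γ sf - G sf = γ s - G s := by
    have := constant_of_has_deriv_right_zero (f := fun t => γ t - G t) (a := s) (b := sf)
      (fun t ht => (((hγ t (hsub ht)).sub (hGd t (hsub ht))).continuousAt).continuousWithinAt)
      (fun t ht => by
        have := (hγ t (hsub (Set.Ico_subset_Icc_self ht))).sub
          (hGd t (hsub (Set.Ico_subset_Icc_self ht)))
        exact (this.congr_deriv (sub_self _)).hasDerivWithinAt)
    exact this sf (Set.right_mem_Icc.2 (le_of_lt (lt_of_lt_of_le hssf le_rfl)))
  have hσS : σ sf - S sf = σ s - S s := by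
    have := constant_of_has_deriv_right_zero (f := fun t => σ t - S t) (a := s) (b := sf)
      (fun t ht => (((hσ t (hsub ht)).sub (hSd t (hsub ht))).continuousAt).continuousWithinAt)
      (fun t ht => by
        have := (hσ t (hsub (Set.Ico_subset_Icc_self ht))).sub
          (hSd t (hsub (Set.Ico_subset_Icc_self ht)))
        exact (this.congr_deriv (sub_self _)).hasDerivWithinAt)
    exact this sf (Set.right_mem_Icc.2 (le_of_lt hssf))
  have hγval : γ sf - γ s = G sf - G s := by linarith
  have hσval : σ s = S s - S sf := by linarith [hσf]
  -- now pure algebra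
  have hRne : sf - s ≠ 0 := ne_of_gt hR
  have hΔne' : 4 + Real.exp (b*(sf - s)) * (b*(sf - s) - 2)
      - (Real.exp (b*(sf - s)))⁻¹ * (b*(sf - s) + 2) ≠ 0 := by
    rw [← Real.exp_neg]; exact ne_of_gt (delta_pos (mul_pos hb hR))
  have hEne : Real.exp (b*(sf - s)) ≠ 0 := Real.exp_ne_zero _
  rw [hk₁ (sf - s) hR, hk₂ (sf - s) hR, hu s ⟨hs0, le_of_lt hssf⟩]
  rw [show γ sf - γ s = G sf - G s from hγval, hσval]
  simp only [hG_def, hS_def, sub_self, mul_zero, Real.exp_zero, neg_zero]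
  rw [Real.exp_neg (b*(sf - s))]
  generalize Real.exp (b*(sf - s)) = E at hΔne' hEne ⊢
  have hD : 4*E + E^2*(b*(sf - s) - 2) - (b*(sf - s) + 2) ≠ 0 := by
    have heq : 4*E + E^2*(b*(sf - s) - 2) - (b*(sf - s) + 2)
        = E * (4 + E * (b*(sf - s) - 2) - E⁻¹ * (b*(sf - s) + 2)) := by
      field_simp
    rw [heq]
    exact mul_ne_zero hEne hΔne'
  rw [show (4 + E * (b*(sf - s) - 2) - E⁻¹ * (b*(sf - s) + 2))
      = (4*E + E^2*(b*(sf - s) - 2) - (b*(sf - s) + 2))/E from by field_simp]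
  simp only [div_div_eq_mul_div]
  generalize hDD : (4*E + E^2*(b*(sf - s) - 2) - (b*(sf - s) + 2)) = D at hD ⊢
  field_simp
  subst hDD
  ring
end
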